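/- Let m ≥ 1, r ≥ 1, α_0, b ∈ ℂ, λ_0, λ_1,…,λ_m, α_1,…,α_m ∈ ℂ* with λ_0,…,λ_m pairwise distinct. Let V be an infinite-dimensional irreducible L̄_r-module on which B_r is injective. Let A be an irreducible K-module (with invertible operator S and operator D satisfying DS − SD = S) such that the Virasoro module A_b, given by the operators L_n = S^n D + n b S^n (n ∈ ℤ) on A, is irreducible. Then the Virasoro modules M(V,Ω(λ_0,α_0)) ⊗ ⊗_{i=1}^m Ω(λ_i,α_i) and A_b are not isomorphic: there is no linear bijection between them commuting with the respective operators L_k for all k ∈ ℤ. -/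

import Mathlib

open TensorProduct

/-- Substitution `X_i ↦ X_i - k` (in the variable `i` only) on `ℂ[X_0,…,X_{N-1}]`. -/
noncomputable def shiftVar {N : ℕ} (i : Fin N) (k : ℂ) :
    MvPolynomial (Fin N) ℂ →ₗ[ℂ] MvPolynomial (Fin N) ℂ :=
  (MvPolynomial.aeval fun j =>
    MvPolynomial.X j - if j = i then MvPolynomial.C k else 0).toLinearMap

/-- The operator `L_k` on `⊗_i Ω(λ_i,α_i) = ℂ[X_0,…,X_{N-1}]`. -/
noncomputable def omegaOp {N : ℕ} (lam al : Fin N → ℂ) (k : ℤ) :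
    MvPolynomial (Fin N) ℂ →ₗ[ℂ] MvPolynomial (Fin N) ℂ :=
  ∑ i : Fin N, (lam i ^ k) •
    ((LinearMap.mulLeft ℂ (MvPolynomial.X i - MvPolynomial.C ((k : ℂ) * al i))).comp
      (shiftVar i (k : ℂ)))

/-- The operator `L_k` on `M(V,Ω(λ_0,α_0)) ⊗ ⊗_{i=1}^m Ω(λ_i,α_i) = V ⊗ ℂ[X_0,…,X_m]`. -/
noncomputable def MOp {V : Type*} [AddCommGroup V] [Module ℂ V]
    (B : ℕ → V →ₗ[ℂ] V) (r : ℕ) {m : ℕ} (lam al : Fin (m + 1) → ℂ) (k : ℤ) :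
    V ⊗[ℂ] MvPolynomial (Fin (m + 1)) ℂ →ₗ[ℂ] V ⊗[ℂ] MvPolynomial (Fin (m + 1)) ℂ :=
  TensorProduct.map LinearMap.id (omegaOp lam al k) +
  ∑ j ∈ Finset.range (r + 1),
    (((k : ℂ) ^ (j + 1)) / ((j + 1).factorial : ℂ)) •
      TensorProduct.map (B j) ((lam 0 ^ k) • shiftVar 0 (k : ℂ))

/-- The Virasoro operator `L_n = S^n D + n b S^n` on a `K`-module `A`
(`S` invertible, `D S − S D = S`). -/
noncomputable def AbOp {A : Type*} [AddCommGroup A] [Module ℂ A]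
    (S : A ≃ₗ[ℂ] A) (D : A →ₗ[ℂ] A) (b : ℂ) (n : ℤ) : A → A :=
  fun x => (S ^ n) (D x) + ((n : ℂ) * b) • (S ^ n) x


open MvPolynomial in
lemma aeval_shiftVar {N : ℕ} (x : Fin N → ℂ) (i : Fin N) (c : ℂ)
    (f : MvPolynomial (Fin N) ℂ) :
    aeval x (shiftVar i c f) =
      aeval (fun j => x j - if j = i then c else 0) f := by
  have h := MvPolynomial.comp_aeval
    (f := fun j : Fin N => (X j - if j = i then (C c : MvPolynomial (Fin N) ℂ) else 0))
    (φ := aeval x)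
  have h2 := congrArg (fun ψ => ψ f) h
  simp only [AlgHom.coe_comp, Function.comp_apply] at h2
  rw [shiftVar]
  simp only [AlgHom.toLinearMap_apply]
  rw [h2]
  have h3 : (fun j : Fin N => (aeval x) (X j - if j = i then (C c : MvPolynomial (Fin N) ℂ) else 0))
      = fun j => x j - if j = i then c else 0 := by
    funext j; by_cases h : j = i <;> simp [h]
  rw [h3]

open MvPolynomial in
lemma aeval_omegaOp {N : ℕ} (lam al : Fin N → ℂ) (k : ℤ) (x : Fin N → ℂ)
    (f : MvPolynomial (Fin N) ℂ) :
    aeval x (omegaOp lam al k f) =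
      ∑ i : Fin N, lam i ^ k * ((x i - (k:ℂ) * al i) *
        aeval (fun j => x j - if j = i then (k:ℂ) else 0) f) := by
  rw [omegaOp]
  simp only [LinearMap.sum_apply, LinearMap.smul_apply, LinearMap.comp_apply,
    LinearMap.mulLeft_apply, map_sum, map_smul, smul_eq_mul, map_mul, map_sub,
    aeval_X, aeval_C, aeval_shiftVar, Algebra.algebraMap_self_apply]

noncomputable def pt (m : ℕ) (s t : ℂ) : Fin (m+1) → ℂ :=
  fun i => s * (if i = 0 then 1 else 0) + t * (if i = 1 then 1 else 0)

open MvPolynomial in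
noncomputable def eps (m : ℕ) : MvPolynomial (Fin (m+1)) ℂ →ₗ[ℂ] ℂ :=
  (aeval (pt m 1 1)).toLinearMap - (aeval (pt m 1 0)).toLinearMap
    - (aeval (pt m 0 1)).toLinearMap + (aeval (pt m 0 0)).toLinearMap

open MvPolynomial in
lemma eps_apply {m : ℕ} (f : MvPolynomial (Fin (m+1)) ℂ) :
    eps m f = aeval (pt m 1 1) f - aeval (pt m 1 0) f
      - aeval (pt m 0 1) f + aeval (pt m 0 0) f := rfl

lemma eval_lin {m : ℕ} (lam al : Fin (m+1) → ℂ) (k : ℤ)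
    (c' : ℂ) (j0 : Fin (m+1)) (s t : ℂ) :
    ∑ i : Fin (m+1), lam i ^ k * ((pt m s t i - (if i = j0 then c' else 0)) - (k:ℂ) * al i)
      = s * lam 0 ^ k + t * lam 1 ^ k - (k:ℂ) * (∑ i : Fin (m+1), lam i ^ k * al i)
        - c' * lam j0 ^ k := by
  have key : ∀ i : Fin (m+1),
      lam i ^ k * ((pt m s t i - (if i = j0 then c' else 0)) - (k:ℂ) * al i)
        = ((if i = 0 then lam i ^ k * s else 0) + (if i = 1 then lam i ^ k * t else 0))
          - (if i = j0 then lam i ^ k * c' else 0) - (k:ℂ) * (lam i ^ k * al i) := by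
    intro i
    simp only [pt]
    split_ifs <;> ring
  rw [Finset.sum_congr rfl (fun i _ => key i)]
  simp only [Finset.sum_sub_distrib, Finset.sum_add_distrib, Finset.sum_ite_eq',
    Finset.mem_univ, if_pos, ← Finset.mul_sum]
  ring

lemma eps_one {m : ℕ} : eps m (1 : MvPolynomial (Fin (m+1)) ℂ) = 0 := by
  simp [eps_apply]

lemma eps_smul {m : ℕ} (c : ℂ) (f : MvPolynomial (Fin (m+1)) ℂ) :
    eps m (c • f) = c * eps m f := by
  rw [map_smul]; simp

open MvPolynomial in
lemma eps_g {m : ℕ} (lam al : Fin (m+1) → ℂ) (k : ℤ) :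
    eps m (omegaOp lam al k 1) = 0 := by
  have ev : ∀ s t : ℂ, aeval (pt m s t) (omegaOp lam al k 1)
      = s * lam 0 ^ k + t * lam 1 ^ k - (k:ℂ) * (∑ i : Fin (m+1), lam i ^ k * al i) := by
    intro s t
    rw [aeval_omegaOp]
    have h := eval_lin lam al k 0 0 s t
    simp only [if_pos, if_neg, ite_self, sub_zero, zero_mul] at h
    rw [← h]
    exact Finset.sum_congr rfl (fun i _ => by simp)
  rw [eps_apply, ev, ev, ev, ev]
  ring

open MvPolynomial in
lemma eps_shift_g {m : ℕ} (lam al : Fin (m+1) → ℂ) (k : ℤ) (c : ℂ) :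
    eps m (shiftVar 0 c (omegaOp lam al k 1)) = 0 := by
  have ev : ∀ s t : ℂ, aeval (pt m s t) (shiftVar 0 c (omegaOp lam al k 1))
      = s * lam 0 ^ k + t * lam 1 ^ k - (k:ℂ) * (∑ i : Fin (m+1), lam i ^ k * al i)
        - c * lam 0 ^ k := by
    intro s t
    rw [aeval_shiftVar, aeval_omegaOp]
    have h := eval_lin lam al k c 0 s t
    rw [← h]
    exact Finset.sum_congr rfl (fun i _ => by simp [sub_sub])
  rw [eps_apply, ev, ev, ev, ev]
  ring

open MvPolynomial in
lemma eps_gg {m : ℕ} (lam al : Fin (m+1) → ℂ) (k k' : ℤ) :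
    eps m (omegaOp lam al k' (omegaOp lam al k 1))
      = lam 0 ^ k' * lam 1 ^ k + lam 1 ^ k' * lam 0 ^ k := by
  set T := ∑ i : Fin (m+1), lam i ^ k * al i with hT
  have inner : ∀ (s t : ℂ) (j : Fin (m+1)),
      aeval (fun jj => pt m s t jj - if jj = j then ((k':ℤ):ℂ) else 0) (omegaOp lam al k 1)
        = s * lam 0 ^ k + t * lam 1 ^ k - (k:ℂ) * T - (k':ℂ) * lam j ^ k := by
    intro s t j
    rw [aeval_omegaOp]
    have h := eval_lin lam al k (k':ℂ) j s t
    rw [← h]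
    exact Finset.sum_congr rfl (fun i _ => by simp [sub_sub])
  have ev : ∀ s t : ℂ, aeval (pt m s t) (omegaOp lam al k' (omegaOp lam al k 1))
      = ∑ j : Fin (m+1), lam j ^ k' * ((pt m s t j - (k':ℂ) * al j) *
          (s * lam 0 ^ k + t * lam 1 ^ k - (k:ℂ) * T - (k':ℂ) * lam j ^ k)) := by
    intro s t
    rw [aeval_omegaOp]
    exact Finset.sum_congr rfl (fun j _ => by rw [inner])
  rw [eps_apply, ev, ev, ev, ev]
  rw [← Finset.sum_sub_distrib, ← Finset.sum_sub_distrib, ← Finset.sum_add_distrib]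
  have key : ∀ j : Fin (m+1),
      lam j ^ k' * ((pt m 1 1 j - (k':ℂ) * al j) *
          (1 * lam 0 ^ k + 1 * lam 1 ^ k - (k:ℂ) * T - (k':ℂ) * lam j ^ k))
        - lam j ^ k' * ((pt m 1 0 j - (k':ℂ) * al j) *
          (1 * lam 0 ^ k + 0 * lam 1 ^ k - (k:ℂ) * T - (k':ℂ) * lam j ^ k))
        - lam j ^ k' * ((pt m 0 1 j - (k':ℂ) * al j) *
          (0 * lam 0 ^ k + 1 * lam 1 ^ k - (k:ℂ) * T - (k':ℂ) * lam j ^ k))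
        + lam j ^ k' * ((pt m 0 0 j - (k':ℂ) * al j) *
          (0 * lam 0 ^ k + 0 * lam 1 ^ k - (k:ℂ) * T - (k':ℂ) * lam j ^ k))
      = (if j = 0 then lam j ^ k' * lam 1 ^ k else 0)
        + (if j = 1 then lam j ^ k' * lam 0 ^ k else 0) := by
    intro j
    simp only [pt]
    split_ifs <;> ring
  rw [Finset.sum_congr rfl (fun j _ => key j)]
  rw [Finset.sum_add_distrib]
  simp [Finset.sum_ite_eq']

lemma shiftVar_one {N : ℕ} (i : Fin N) (c : ℂ) :
    shiftVar i c (1 : MvPolynomial (Fin N) ℂ) = 1 := by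
  simp [shiftVar]

noncomputable def Fmap (V : Type*) [AddCommGroup V] [Module ℂ V] (m : ℕ) :
    V ⊗[ℂ] MvPolynomial (Fin (m+1)) ℂ →ₗ[ℂ] V :=
  (TensorProduct.rid ℂ V).toLinearMap ∘ₗ TensorProduct.map LinearMap.id (eps m)

lemma Fmap_tmul {V : Type*} [AddCommGroup V] [Module ℂ V] {m : ℕ}
    (v : V) (f : MvPolynomial (Fin (m+1)) ℂ) :
    Fmap V m (v ⊗ₜ[ℂ] f) = eps m f • v := by
  simp [Fmap, TensorProduct.rid_tmul]

lemma MOp_tmul {V : Type*} [AddCommGroup V] [Module ℂ V]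
    (B : ℕ → V →ₗ[ℂ] V) (r : ℕ) {m : ℕ} (lam al : Fin (m + 1) → ℂ) (k : ℤ)
    (v : V) (f : MvPolynomial (Fin (m+1)) ℂ) :
    MOp B r lam al k (v ⊗ₜ[ℂ] f) =
      v ⊗ₜ[ℂ] (omegaOp lam al k f) +
      ∑ j ∈ Finset.range (r + 1),
        (((k : ℂ) ^ (j + 1)) / ((j + 1).factorial : ℂ)) •
          (B j v ⊗ₜ[ℂ] ((lam 0 ^ k) • shiftVar 0 (k : ℂ) f)) := by
  simp [MOp, LinearMap.add_apply, LinearMap.sum_apply, LinearMap.smul_apply,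
    TensorProduct.map_tmul]

lemma F_MM {V : Type*} [AddCommGroup V] [Module ℂ V]
    (B : ℕ → V →ₗ[ℂ] V) (r : ℕ) {m : ℕ} (lam al : Fin (m + 1) → ℂ)
    (v : V) (k k' : ℤ) :
    Fmap V m (MOp B r lam al k' (MOp B r lam al k (v ⊗ₜ[ℂ] 1)))
      = (lam 0 ^ k' * lam 1 ^ k + lam 1 ^ k' * lam 0 ^ k) • v := by
  rw [MOp_tmul, shiftVar_one]
  rw [map_add, map_add, map_sum, map_sum]
  rw [MOp_tmul]
  simp only [tmul_smul, map_smul, MOp_tmul, shiftVar_one]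
  simp only [map_add, map_sum, map_smul, Fmap_tmul, eps_smul,
    eps_gg lam al k k', eps_g lam al k', eps_shift_g lam al k (k':ℂ),
    eps_one, mul_zero, zero_smul, smul_zero, Finset.sum_const_zero, add_zero]

lemma Ab_identity {A : Type*} [AddCommGroup A] [Module ℂ A]
    (S : A ≃ₗ[ℂ] A) (D : A →ₗ[ℂ] A) (b : ℂ)
    (hDS : ∀ x : A, D (S x) - S (D x) = S x) (x : A) :
    AbOp S D b 1 (AbOp S D b (-1) x) + AbOp S D b (-1) (AbOp S D b 1 x)
      = (2:ℂ) • AbOp S D b 0 (AbOp S D b 0 x) + (2*b - 2*b^2) • x := by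
  have hS : ∀ y : A, D (S y) = S (D y) + S y := fun y => by
    have h := hDS y; linear_combination (norm := module) h
  have hSi : ∀ y : A, D (S.symm y) = S.symm (D y) - S.symm y := by
    intro y
    have h := hS (S.symm y)
    rw [S.apply_symm_apply] at h
    have h2 := congrArg S.symm h
    simp only [map_add, S.symm_apply_apply] at h2
    linear_combination (norm := module) -h2
  have hz1 : (S ^ (1:ℤ)) = S := zpow_one S
  have hzm : (S ^ (-1:ℤ)) = S.symm := by
    rw [zpow_neg, zpow_one]; rfl
  have hz0 : ∀ y : A, (S ^ (0:ℤ)) y = y := fun y => by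
    rw [zpow_zero]; rfl
  simp only [AbOp, hz1, hzm, hz0, Int.cast_one, Int.cast_neg, Int.cast_zero,
    one_mul, zero_mul, zero_smul, add_zero]
  simp only [map_add, map_smul, hS, hSi, map_sub, S.apply_symm_apply, S.symm_apply_apply]
  module

/-- **Proposition 5.3 (third part).** Let `m ≥ 1`, `r ≥ 1`, `α_0, b ∈ ℂ`,
`λ_0,…,λ_m, α_1,…,α_m ∈ ℂ*` with `λ_0,…,λ_m` pairwise distinct. Let `V` be an
infinite-dimensional irreducible `L̄_r`-module with `B_r` injective, and `A` an
irreducible `K`-module such that the Virasoro module `A_b` is irreducible.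
Then `M(V,Ω(λ_0,α_0)) ⊗ ⊗_{i=1}^m Ω(λ_i,α_i) ≇ A_b`. -/
theorem statement16 {V A : Type*} [AddCommGroup V] [Module ℂ V]
    [AddCommGroup A] [Module ℂ A]
    (m r : ℕ) (hm : 1 ≤ m) (hr : 1 ≤ r) (b : ℂ)
    (lam al : Fin (m + 1) → ℂ)
    (hlam : ∀ i, lam i ≠ 0) (hlaminj : Function.Injective lam)
    (hal : ∀ i, i ≠ 0 → al i ≠ 0)
    (B : ℕ → V →ₗ[ℂ] V)
    (hBtop : ∀ i, r < i → B i = 0)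
    (hBrel : ∀ i j, i ≤ r → j ≤ r →
      B i ∘ₗ B j - B j ∘ₗ B i = (((j : ℂ) - (i : ℂ)) • B (i + j) : V →ₗ[ℂ] V))
    (hVne : ∃ v : V, v ≠ 0)
    (hVirr : ∀ U : Submodule ℂ V, (∀ i, i ≤ r → ∀ w ∈ U, B i w ∈ U) → U = ⊥ ∨ U = ⊤)
    (hVinf : ¬ Module.Finite ℂ V)
    (hBrinj : Function.Injective (B r))
    (S : A ≃ₗ[ℂ] A) (D : A →ₗ[ℂ] A)
    (hDS : ∀ x : A, D (S x) - S (D x) = S x)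
    (hAne : ∃ x : A, x ≠ 0)
    (hKirr : ∀ U : Submodule ℂ A,
      (∀ x ∈ U, S x ∈ U) → (∀ x ∈ U, S.symm x ∈ U) → (∀ x ∈ U, D x ∈ U) →
      U = ⊥ ∨ U = ⊤)
    (hAbirr : ∀ U : Submodule ℂ A,
      (∀ n : ℤ, ∀ x ∈ U, AbOp S D b n x ∈ U) → U = ⊥ ∨ U = ⊤) :
    ¬ ∃ φ : (V ⊗[ℂ] MvPolynomial (Fin (m + 1)) ℂ) ≃ₗ[ℂ] A,
        ∀ (k : ℤ) (x : V ⊗[ℂ] MvPolynomial (Fin (m + 1)) ℂ),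
          φ (MOp B r lam al k x) = AbOp S D b k (φ x) := by
  have h01 : (0 : Fin (m+1)) ≠ 1 := by
    intro h
    have h2 : (0 : Fin (m+1)).val = (1 : Fin (m+1)).val := congrArg Fin.val h
    rw [Fin.val_zero, Fin.val_one', Nat.mod_eq_of_lt (by omega)] at h2
    exact absurd h2 (by norm_num)
  rintro ⟨φ, hφ⟩
  obtain ⟨v, hv⟩ := hVne
  set x0 : V ⊗[ℂ] MvPolynomial (Fin (m + 1)) ℂ := v ⊗ₜ[ℂ] 1 with hx0
  have key : MOp B r lam al 1 (MOp B r lam al (-1) x0)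
        + MOp B r lam al (-1) (MOp B r lam al 1 x0)
      = (2:ℂ) • MOp B r lam al 0 (MOp B r lam al 0 x0) + (2*b - 2*b^2) • x0 := by
    apply φ.injective
    rw [map_add, hφ, hφ, hφ, hφ, map_add, map_smul, map_smul, hφ, hφ]
    exact Ab_identity S D b hDS (φ x0)
  have keyF := congrArg (Fmap V m) key
  rw [map_add, map_add, map_smul, map_smul] at keyF
  rw [hx0] at keyF
  rw [F_MM B r lam al v (-1) 1, F_MM B r lam al v 1 (-1), F_MM B r lam al v 0 0,
    Fmap_tmul, eps_one, zero_smul, smul_zero, add_zero] at keyF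
  have hl0 : lam 0 ≠ 0 := hlam 0
  have hl1 : lam 1 ≠ 0 := hlam 1
  have hne : lam 0 ≠ lam 1 := fun h => h01 (hlaminj h)
  simp only [zpow_one, zpow_zero, zpow_neg, one_mul, mul_one] at keyF
  rw [smul_smul] at keyF
  have hscal : (lam 0 * (lam 1)⁻¹ + lam 1 * (lam 0)⁻¹)
      + ((lam 0)⁻¹ * lam 1 + (lam 1)⁻¹ * lam 0) = (2:ℂ) * (1 + 1) := by
    have hz : ((lam 0 * (lam 1)⁻¹ + lam 1 * (lam 0)⁻¹)
        + ((lam 0)⁻¹ * lam 1 + (lam 1)⁻¹ * lam 0) - (2:ℂ) * (1 + 1)) • v = 0 := by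
      rw [sub_smul, add_smul]
      rw [keyF]
      abel
    rcases smul_eq_zero.mp hz with h | h
    · exact sub_eq_zero.mp h
    · exact absurd h hv
  have hsq : 2 * lam 0 * lam 1 * ((lam 0 - lam 1)^2) = 0 := by
    field_simp at hscal
    linear_combination (lam 0 * lam 1) * hscal
  rcases mul_eq_zero.mp hsq with h | h
  · exact absurd h (by simp [hl0, hl1])
  · exact hne (sub_eq_zero.mp (pow_eq_zero_iff (n := 2) (by norm_num) |>.mp h))
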